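/- Let a = 0 and b ≠ 0, and A₂ = k[x,y]/(y² - x³ - b) with derivation ∂₂ = -2y·∂/∂x - 3x²·∂/∂y. Then the cokernel of ∂₂ : A₂ → A₂ is a 2-dimensional k-vector space with basis given by the images of 1 and x. -/

import Mathlib

open MvPolynomial

set_option linter.unusedSectionVars false
set_option maxHeartbeats 1000000

noncomputable section CokerAux
variable {k : Type*} [Field k] [CharZero k] (b : k)

private def lamAux : ℕ → Fin 2 → k
  | 0 => ![1, 0]
  | 1 => ![0, 1]
  | 2 => 0
  | (n+3) => (-(2*(n:k)+2) * b / (2*(n:k)+5)) • lamAux n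

private def muAux : ℕ → ℕ → Fin 2 → k
  | i, 0 => lamAux b i
  | _, 1 => 0
  | i, (j+2) => muAux (i+3) j + b • muAux i j

private lemma lam_two : ∀ t, lamAux (k := k) b (3*t+2) = 0 := by
  intro t
  induction t with
  | zero => simp [lamAux]
  | succ t ih =>
      have : 3*(t+1)+2 = (3*t+2)+3 := by ring
      rw [this, lamAux, ih, smul_zero]

private lemma mu_odd : ∀ s i, muAux (k := k) b i (2*s+1) = 0 := by
  intro s
  induction s with
  | zero => intro i; simp [muAux]
  | succ s ih =>
      intro i
      have : 2*(s+1)+1 = (2*s+1)+2 := by ring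
      rw [this, muAux, ih, ih, smul_zero, add_zero]

private lemma mu_two : ∀ s t, muAux (k := k) b (3*t+2) (2*s) = 0 := by
  intro s
  induction s with
  | zero => intro t; simp only [Nat.mul_zero, muAux]; exact lam_two b t
  | succ s ih =>
      intro t
      have h : 2*(s+1) = 2*s+2 := by ring
      have h2 : 3*t+2+3 = 3*(t+1)+2 := by ring
      rw [h, muAux, h2, ih, ih, smul_zero, add_zero]

private lemma keyH : ∀ s i : ℕ, (2*(i:k)+6*s+5) • muAux b (i+3) (2*s)
    + ((2*(i:k)+2)*b) • muAux b i (2*s) = 0 := by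
  intro s
  induction s with
  | zero =>
      intro i
      have hne : (2*(i:k)+5) ≠ 0 := by
        have : ((2*i+5 : ℕ) : k) ≠ 0 := Nat.cast_ne_zero.mpr (by omega)
        push_cast at this; convert this using 2
      simp only [Nat.mul_zero, muAux, Nat.cast_zero]
      rw [show i+3 = i+3 from rfl, lamAux]
      rw [smul_smul]
      rw [show (2*(i:k)+6*0+5) * (-(2*(i:k)+2) * b / (2*(i:k)+5)) = -((2*(i:k)+2)*b) by
        field_simp; ring]
      rw [neg_smul, neg_add_cancel]
  | succ s ih =>
      intro i
      have e1 : 2*(s+1) = 2*s+2 := by ring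
      rw [e1, muAux, muAux]
      have h1 := ih (i+3)
      have h2 := ih i
      push_cast at h1 h2 ⊢
      linear_combination (norm := module) h1 + b • h2

private def QAux : MvPolynomial (Fin 2) k →ₗ[k] (Fin 2 → k) :=
  (MvPolynomial.basisMonomials (Fin 2) k).constr k (fun d => muAux b (d 0) (d 1))

private lemma Q_monomial (d : Fin 2 →₀ ℕ) (c : k) :
    QAux b (monomial d c) = c • muAux b (d 0) (d 1) := by
  have h1 : (monomial d c : MvPolynomial (Fin 2) k) = c • monomial d 1 := by
    simp [MvPolynomial.smul_monomial]
  rw [h1, map_smul]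
  congr 1
  have := Module.Basis.constr_basis (MvPolynomial.basisMonomials (Fin 2) k) k
    (fun d : Fin 2 →₀ ℕ => muAux b (d 0) (d 1)) d
  rwa [MvPolynomial.coe_basisMonomials] at this

private lemma Q_mul_rel (g : MvPolynomial (Fin 2) k) :
    QAux b (g * (X 1 ^ 2 - X 0 ^ 3 - C b)) = 0 := by
  induction g using MvPolynomial.induction_on' with
  | add p q hp hq => rw [add_mul, map_add, hp, hq, add_zero]
  | monomial d c =>
      rw [mul_sub, mul_sub, map_sub, map_sub]
      rw [X_pow_eq_monomial, X_pow_eq_monomial, monomial_mul, monomial_mul]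
      have hC : (C b : MvPolynomial (Fin 2) k) = monomial 0 b := MvPolynomial.C_apply
      rw [hC, monomial_mul]
      rw [Q_monomial, Q_monomial, Q_monomial]
      have e0 : ((d + fun₀ | (1:Fin 2) => 2) : Fin 2 →₀ ℕ) 0 = d 0 := by simp
      have e1 : ((d + fun₀ | (1:Fin 2) => 2) : Fin 2 →₀ ℕ) 1 = d 1 + 2 := by simp
      have f0 : ((d + fun₀ | (0:Fin 2) => 3) : Fin 2 →₀ ℕ) 0 = d 0 + 3 := by simp
      have f1 : ((d + fun₀ | (0:Fin 2) => 3) : Fin 2 →₀ ℕ) 1 = d 1 := by simp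
      rw [e0, e1, f0, f1]
      simp only [Finsupp.add_apply, Finsupp.coe_zero, Pi.zero_apply, add_zero, mul_one]
      rw [muAux]
      module

private def EP (p : MvPolynomial (Fin 2) k) : MvPolynomial (Fin 2) k :=
  (-2 * X 1) * pderiv 0 p + (-(3 * X 0 ^ 2)) * pderiv 1 p

private lemma Q_EP (p : MvPolynomial (Fin 2) k) : QAux b (EP p) = 0 := by
  induction p using MvPolynomial.induction_on' with
  | add p q hp hq =>
      have : EP (p + q) = EP p + EP q := by
        simp only [EP, map_add]; ring
      rw [this, map_add, hp, hq, add_zero]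
  | monomial d c =>
      have h2 : (-2 * X 1 : MvPolynomial (Fin 2) k) = monomial (fun₀ | 1 => 1) (-2) := by
        have h : (-2 : MvPolynomial (Fin 2) k) = C (-2) := by
          have h2' : (C 2 : MvPolynomial (Fin 2) k) = 2 := map_ofNat C 2
          rw [map_neg, h2']
        rw [h, X, C_mul_monomial, mul_one]
      have h3 : (-(3 * X 0 ^ 2) : MvPolynomial (Fin 2) k) = monomial (fun₀ | 0 => 2) (-3) := by
        have h : (-(3 * X 0 ^ 2) : MvPolynomial (Fin 2) k) = C (-3) * X 0 ^ 2 := by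
          have h3' : (C 3 : MvPolynomial (Fin 2) k) = 3 := map_ofNat C 3
          rw [map_neg, h3']; ring
        rw [h, X_pow_eq_monomial, C_mul_monomial, mul_one]
      rw [EP, pderiv_monomial, pderiv_monomial, h2, h3, monomial_mul, monomial_mul,
        map_add, Q_monomial, Q_monomial]
      have e0 : (((fun₀ | (1:Fin 2) => 1) + (d - fun₀ | (0:Fin 2) => 1)) : Fin 2 →₀ ℕ) 0
          = d 0 - 1 := by simp
      have e1 : (((fun₀ | (1:Fin 2) => 1) + (d - fun₀ | (0:Fin 2) => 1)) : Fin 2 →₀ ℕ) 1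
          = d 1 + 1 := by simp [Finsupp.tsub_apply]; omega
      have f0 : (((fun₀ | (0:Fin 2) => 2) + (d - fun₀ | (1:Fin 2) => 1)) : Fin 2 →₀ ℕ) 0
          = d 0 + 2 := by simp [Finsupp.tsub_apply]; omega
      have f1 : (((fun₀ | (0:Fin 2) => 2) + (d - fun₀ | (1:Fin 2) => 1)) : Fin 2 →₀ ℕ) 1
          = d 1 - 1 := by simp
      rw [e0, e1, f0, f1]
      rcases Nat.even_or_odd (d 1) with ⟨s, hs⟩ | ⟨s, hs⟩
      · -- d 1 even
        rcases s with _ | s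
        · have hd1 : d 1 = 0 := by omega
          rw [hd1]
          simp [muAux]
        · have hd1 : d 1 = 2*(s+1) := by omega
          rw [hd1, show 2*(s+1) - 1 = 2*s+1 by omega, show 2*(s+1)+1 = 2*(s+1)+1 from rfl,
            mu_odd, mu_odd, smul_zero, smul_zero, add_zero]
      · -- d 1 odd : d 1 = 2s+1
        rw [hs]
        rw [show 2*s+1+1 = 2*s+2 from rfl, show 2*s+1-1 = 2*s by omega]
        rw [muAux]
        rcases Nat.eq_zero_or_pos (d 0) with h0 | h0
        · rw [h0]
          have hm2 : muAux (k := k) b 2 (2*s) = 0 := by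
            have := mu_two (k := k) b s 0
            simpa using this
          simp only [show (0:ℕ)-1 = 0 from rfl, show (0:ℕ)+2 = 2 from rfl,
            show (0:ℕ)-1+3 = 3 from rfl, hm2]
          simp
        · obtain ⟨i, hi⟩ : ∃ i, d 0 = i + 1 := ⟨d 0 - 1, by omega⟩
          rw [hi, show i+1-1 = i from rfl, show i+1+2 = i+3 from rfl]
          have h := keyH b s i
          push_cast
          linear_combination (norm := module) (-c) • h

end CokerAux

/-- For `a = 0`, `b ≠ 0`, `A₂ = k[x,y]/(y² - x³ - b)` with the derivation
`∂₂` given by `∂₂(x) = -2y`, `∂₂(y) = -3x²`, the cokernel of `∂₂ : A₂ → A₂` is a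
2-dimensional `k`-vector space with basis the images of `1` and `x`. -/
theorem coker_del2_a_zero (k : Type*) [Field k] [IsAlgClosed k] [CharZero k] (b : k)
    (hb : b ≠ 0)
    (A₂ : Type*) [CommRing A₂] [Algebra k A₂]
    (π : MvPolynomial (Fin 2) k →ₐ[k] A₂)
    (hπ : Function.Surjective π)
    (hker : RingHom.ker π.toRingHom =
      Ideal.span {(X 1 ^ 2 - X 0 ^ 3 - C b : MvPolynomial (Fin 2) k)})
    (D : Derivation k A₂ A₂)
    (hx : D (π (X 0)) = π (-2 * X 1))
    (hy : D (π (X 1)) = π (-(3 * X 0 ^ 2))) :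
    ∃ bas : Module.Basis (Fin 2) k (A₂ ⧸ LinearMap.range D.toLinearMap),
      bas 0 = Submodule.Quotient.mk (π 1) ∧
      bas 1 = Submodule.Quotient.mk (π (X 0)) := by
  classical
  set rel : MvPolynomial (Fin 2) k := X 1 ^ 2 - X 0 ^ 3 - C b with hrel_def
  -- π kills multiples of rel
  have hmul : ∀ g : MvPolynomial (Fin 2) k, π (g * rel) = 0 := by
    intro g
    have : g * rel ∈ RingHom.ker π.toRingHom := by
      rw [hker]; exact Ideal.mem_span_singleton'.mpr ⟨g, rfl⟩
    exact this
  -- D ∘ π = π ∘ EP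
  have hD : ∀ p : MvPolynomial (Fin 2) k, D (π p) = π (EP p) := by
    intro p
    induction p using MvPolynomial.induction_on with
    | C a =>
        have hE : EP (C a : MvPolynomial (Fin 2) k) = 0 := by simp [EP]
        rw [hE, map_zero, show (C a : MvPolynomial (Fin 2) k) = algebraMap k _ a from rfl,
          π.commutes, Derivation.map_algebraMap]
    | add p q hp hq =>
        rw [map_add, map_add, hp, hq]
        have : EP (p + q) = EP p + EP q := by simp [EP, map_add]; ring
        rw [this, map_add]
    | mul_X p n hp =>
        rw [map_mul, D.leibniz, smul_eq_mul, smul_eq_mul, hp]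
        fin_cases n <;> simp only [Fin.zero_eta, Fin.mk_one, Fin.isValue]
        · rw [hx, ← map_mul, ← map_mul, ← map_add]
          congr 1
          simp only [EP, pderiv_mul, pderiv_X_self, pderiv_X_of_ne (by decide : (0:Fin 2) ≠ 1)]
          ring
        · rw [hy, ← map_mul, ← map_mul, ← map_add]
          congr 1
          simp only [EP, pderiv_mul, pderiv_X_self, pderiv_X_of_ne (by decide : (1:Fin 2) ≠ 0)]
          ring
  -- the linear functional on A₂
  have hkerQ : LinearMap.ker π.toLinearMap ≤ LinearMap.ker (QAux b) := by
    intro p hp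
    have hp' : p ∈ RingHom.ker π.toRingHom := hp
    rw [hker] at hp'
    obtain ⟨g, rfl⟩ := Ideal.mem_span_singleton'.mp hp'
    exact Q_mul_rel b g
  have hπ' : Function.Surjective π.toLinearMap := hπ
  set e := LinearMap.quotKerEquivOfSurjective π.toLinearMap hπ' with he
  set q : A₂ →ₗ[k] (Fin 2 → k) :=
    ((LinearMap.ker π.toLinearMap).liftQ (QAux b) hkerQ).comp e.symm.toLinearMap with hq
  have hqπ : ∀ p : MvPolynomial (Fin 2) k, q (π p) = QAux b p := by
    intro p
    have hmk : e.symm (π p) = Submodule.Quotient.mk p := by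
      rw [LinearEquiv.symm_apply_eq]
      rfl
    rw [hq]
    simp only [LinearMap.coe_comp, Function.comp_apply, LinearEquiv.coe_coe]
    rw [hmk, Submodule.liftQ_apply]
  have hq1 : q (π 1) = ![1, 0] := by
    rw [hqπ, show (1 : MvPolynomial (Fin 2) k) = monomial 0 1 from rfl,
      Q_monomial]
    simp [muAux, lamAux]
  have hqX : q (π (X 0)) = ![0, 1] := by
    rw [hqπ, show (X 0 : MvPolynomial (Fin 2) k) = monomial (fun₀ | 0 => 1) 1 from rfl,
      Q_monomial]
    simp [muAux, lamAux]
  have hqD : LinearMap.range D.toLinearMap ≤ LinearMap.ker q := by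
    rintro w ⟨a, rfl⟩
    obtain ⟨p, rfl⟩ := hπ a
    rw [LinearMap.mem_ker, show D.toLinearMap (π p) = D (π p) from rfl, hD, hqπ]
    exact Q_EP b p
  -- helper: π (C c * p) = c • π p
  have hsm : ∀ (c : k) (p : MvPolynomial (Fin 2) k), π (C c * p) = c • π p := by
    intro c p
    rw [map_mul, show π (C c) = algebraMap k A₂ c from π.commutes c, ← Algebra.smul_def]
  set S : Submodule k A₂ :=
    Submodule.span k {π 1, π (X 0)} ⊔ LinearMap.range D.toLinearMap with hS
  have hrange : LinearMap.range D.toLinearMap ≤ S := le_sup_right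
  -- D of powers of x
  have hDpow : ∀ n : ℕ, D (π (X 0 ^ (n+1))) = ((-2) * ((n:k)+1)) • π (X 0 ^ n * X 1) := by
    intro n
    rw [map_pow, Derivation.leibniz_pow, hx, show n+1-1 = n from rfl, smul_eq_mul,
      ← map_pow, ← map_mul]
    have h1 : (X 0 ^ n * (-2 * X 1) : MvPolynomial (Fin 2) k) = C (-2) * (X 0 ^ n * X 1) := by
      have h2' : (C 2 : MvPolynomial (Fin 2) k) = 2 := map_ofNat C 2
      rw [map_neg, h2']; ring
    rw [h1, hsm, ← Nat.cast_smul_eq_nsmul k (n+1), smul_smul]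
    push_cast
    ring_nf
  have hxy : ∀ n : ℕ, π (X 0 ^ n * X 1) ∈ LinearMap.range D.toLinearMap := by
    intro n
    have hc : ((-2 : k) * ((n:k)+1)) ≠ 0 := by
      have h1 : ((n:k)+1) ≠ 0 := Nat.cast_add_one_ne_zero n
      have h2 : (-2 : k) ≠ 0 := by norm_num
      exact mul_ne_zero h2 h1
    refine (Submodule.smul_mem_iff _ hc).mp ?_
    rw [← hDpow n]
    exact ⟨π (X 0 ^ (n+1)), rfl⟩
  have hx2 : π (X 0 ^ 2) ∈ LinearMap.range D.toLinearMap := by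
    have hc : (-3 : k) ≠ 0 := by norm_num
    refine (Submodule.smul_mem_iff _ hc).mp ?_
    have h1 : (-(3 * X 0 ^ 2) : MvPolynomial (Fin 2) k) = C (-3) * X 0 ^ 2 := by
      have h3' : (C 3 : MvPolynomial (Fin 2) k) = 3 := map_ofNat C 3
      rw [map_neg, h3']; ring
    rw [← hsm, ← h1, ← hy]
    exact ⟨π (X 1), rfl⟩
  -- y² ≡ x³ + b relation under π
  have hsq : ∀ n : ℕ, π (X 0 ^ n * X 1 ^ 2) = π (X 0 ^ (n+3)) + b • π (X 0 ^ n) := by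
    intro n
    have h1 : (X 0 ^ n * X 1 ^ 2 : MvPolynomial (Fin 2) k)
        = X 0 ^ n * rel + (X 0 ^ (n+3) + C b * X 0 ^ n) := by
      rw [hrel_def]; ring
    rw [h1, map_add, hmul, zero_add, map_add, hsm]
  -- the key step identity
  have hDw : ∀ n : ℕ, D (π (X 0 ^ (n+1) * X 1))
      = (-(2*(n:k)+5)) • π (X 0 ^ (n+3)) + ((-(2*(n:k))-2)*b) • π (X 0 ^ n) := by
    intro n
    rw [map_mul, D.leibniz, hy, hDpow n, smul_comm (π (X 1)), smul_eq_mul, smul_eq_mul,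
      ← map_mul, ← map_mul]
    have h1 : (X 0 ^ (n+1) * -(3 * X 0 ^ 2) : MvPolynomial (Fin 2) k)
        = C (-3) * X 0 ^ (n+3) := by
      have h3' : (C 3 : MvPolynomial (Fin 2) k) = 3 := map_ofNat C 3
      rw [map_neg, h3']; ring
    have h2 : (X 1 * (X 0 ^ n * X 1) : MvPolynomial (Fin 2) k) = X 0 ^ n * X 1 ^ 2 := by ring
    rw [h1, hsm, h2, hsq n]
    module
  have hstep : ∀ n : ℕ, π (X 0 ^ n) ∈ S → π (X 0 ^ (n+3)) ∈ S := by
    intro n hn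
    have hc : (2*(n:k)+5) ≠ 0 := by
      have : ((2*n+5 : ℕ) : k) ≠ 0 := Nat.cast_ne_zero.mpr (by omega)
      push_cast at this; convert this using 2
    refine (Submodule.smul_mem_iff _ hc).mp ?_
    have h1 : (2*(n:k)+5) • π (X 0 ^ (n+3))
        = ((-(2*(n:k))-2)*b) • π (X 0 ^ n) - D (π (X 0 ^ (n+1) * X 1)) := by
      rw [hDw n]; module
    rw [h1]
    exact Submodule.sub_mem _ (Submodule.smul_mem _ _ hn)
      (hrange ⟨π (X 0 ^ (n+1) * X 1), rfl⟩)
  have hspanS : {π 1, π (X 0)} ⊆ (S : Set A₂) := by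
    intro z hz
    exact (le_sup_left : Submodule.span k {π 1, π (X 0)} ≤ S) (Submodule.subset_span hz)
  have hpow : ∀ n : ℕ, π (X 0 ^ n) ∈ S := by
    have h3 : ∀ m : ℕ, π (X 0 ^ m) ∈ S ∧ π (X 0 ^ (m+1)) ∈ S ∧ π (X 0 ^ (m+2)) ∈ S := by
      intro m
      induction m with
      | zero =>
          refine ⟨?_, ?_, hrange hx2⟩
          · rw [pow_zero]; exact hspanS (by simp)
          · rw [pow_one]; exact hspanS (by simp)
      | succ m ih =>
          refine ⟨ih.2.1, ih.2.2, ?_⟩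
          have := hstep m ih.1
          rw [show m+3 = m+1+2 by omega] at this
          exact this
    exact fun n => (h3 n).1
  have hmon : ∀ j i : ℕ, π (X 0 ^ i * X 1 ^ j) ∈ S := by
    have h2 : ∀ j : ℕ, (∀ i, π (X 0 ^ i * X 1 ^ j) ∈ S)
        ∧ (∀ i, π (X 0 ^ i * X 1 ^ (j+1)) ∈ S) := by
      intro j
      induction j with
      | zero =>
          constructor
          · intro i; rw [pow_zero, mul_one]; exact hpow i
          · intro i; rw [pow_one]; exact hrange (hxy i)
      | succ j ih =>
          refine ⟨ih.2, ?_⟩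
          intro i
          have hid : π (X 0 ^ i * X 1 ^ (j+2))
              = π (X 0 ^ (i+3) * X 1 ^ j) + b • π (X 0 ^ i * X 1 ^ j) := by
            have h1 : (X 0 ^ i * X 1 ^ (j+2) : MvPolynomial (Fin 2) k)
                = (X 0 ^ i * X 1 ^ j) * rel
                  + (X 0 ^ (i+3) * X 1 ^ j + C b * (X 0 ^ i * X 1 ^ j)) := by
              rw [hrel_def]; ring
            rw [h1, map_add, hmul, zero_add, map_add, hsm]
          rw [show j+1+1 = j+2 by omega, hid]
          exact S.add_mem (ih.1 _) (S.smul_mem _ (ih.1 _))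
    exact fun j i => (h2 j).1 i
  have htop : ∀ a : A₂, a ∈ S := by
    intro a
    obtain ⟨p, rfl⟩ := hπ a
    induction p using MvPolynomial.induction_on' with
    | monomial d c =>
        have hd : d = (fun₀ | (0 : Fin 2) => d 0) + (fun₀ | (1 : Fin 2) => d 1) := by
          ext a
          fin_cases a <;> simp
        have hmono : (monomial d c : MvPolynomial (Fin 2) k)
            = c • (X 0 ^ (d 0) * X 1 ^ (d 1)) := by
          rw [X_pow_eq_monomial, X_pow_eq_monomial, monomial_mul, one_mul,
            MvPolynomial.smul_monomial, smul_eq_mul, mul_one, ← hd]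
        rw [hmono, map_smul]
        exact S.smul_mem _ (hmon (d 1) (d 0))
    | add p1 p2 hp1 hp2 =>
        rw [map_add]; exact S.add_mem hp1 hp2
  -- final assembly
  set R := LinearMap.range D.toLinearMap with hR
  set qbar := R.liftQ q hqD with hqbar
  set v : Fin 2 → (A₂ ⧸ R) :=
    ![Submodule.Quotient.mk (π 1), Submodule.Quotient.mk (π (X 0))] with hv
  have hcomp : ⇑qbar ∘ v = ![![1, 0], ![0, 1]] := by
    funext i
    fin_cases i
    · show qbar (Submodule.Quotient.mk (π 1)) = ![1, 0]
      rw [hqbar, Submodule.liftQ_apply, hq1]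
    · show qbar (Submodule.Quotient.mk (π (X 0))) = ![0, 1]
      rw [hqbar, Submodule.liftQ_apply, hqX]
  have hLI : LinearIndependent k (![![1, 0], ![0, 1]] : Fin 2 → (Fin 2 → k)) := by
    rw [LinearIndependent.pair_iff]
    intro s t hst
    have h0 := congrFun hst 0
    have h1 := congrFun hst 1
    simp at h0 h1
    exact ⟨h0, h1⟩
  have hind : LinearIndependent k v := by
    apply LinearIndependent.of_comp qbar
    rw [hcomp]
    exact hLI
  have hspanv : ⊤ ≤ Submodule.span k (Set.range v) := by
    rintro w -
    obtain ⟨a, rfl⟩ := Submodule.Quotient.mk_surjective R w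
    obtain ⟨s, hsmem, r, hrmem, rfl⟩ := Submodule.mem_sup.mp (htop a)
    have hadd : (Submodule.Quotient.mk (s + r) : A₂ ⧸ R)
        = Submodule.Quotient.mk s + Submodule.Quotient.mk r := rfl
    have hz : (Submodule.Quotient.mk r : A₂ ⧸ R) = 0 :=
      (Submodule.Quotient.mk_eq_zero R).mpr hrmem
    rw [hadd, hz, add_zero]
    have hle : Submodule.span k {π 1, π (X 0)}
        ≤ Submodule.comap R.mkQ (Submodule.span k (Set.range v)) := by
      rw [Submodule.span_le]
      rintro z (rfl | rfl)
      · exact Submodule.subset_span ⟨0, rfl⟩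
      · exact Submodule.subset_span ⟨1, rfl⟩
    exact hle hsmem
  refine ⟨Module.Basis.mk hind hspanv, ?_, ?_⟩
  · rw [Module.Basis.mk_apply]; rfl
  · rw [Module.Basis.mk_apply]; rfl
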